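/- Let Γ be a discrete subgroup of ℝ^{d+e} and suppose the cut-and-project set M = π₁(Γ ∩ (ℝ^d × Ω)), for some bounded Ω ⊆ ℝ^e, is relatively dense in ℝ^d while Γ is not a lattice in ℝ^{d+e}. Then the orthogonal complement V₀ of the real span of Γ in ℝ^{d+e} is orthogonal to ℝ^d × {0}, i.e. V₀ = {0} × V for a subspace V ≤ ℝ^e. -/

import Mathlib

open RealInnerProductSpace

/-- If `Γ ≤ ℝ^{d+e}` is a discrete subgroup, not a lattice, such that the
cut-and-project set `M = π₁(Γ ∩ (ℝ^d × Ω))` (with `Ω` bounded) is relatively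
dense in `ℝ^d`, then every vector orthogonal to `Γ` has vanishing first
component, i.e. the orthogonal complement of `Γ` has the form `{0} × V`. -/
theorem orthogonal_complement_of_gamma (d e : ℕ)
    (Γ : AddSubgroup (EuclideanSpace ℝ (Fin d) × EuclideanSpace ℝ (Fin e)))
    (hdisc : ∃ ε > 0, ∀ γ ∈ Γ, γ ≠ 0 → ε ≤ ‖γ‖)
    (hnotlattice : ¬ ∃ R > 0,
      ∀ p : EuclideanSpace ℝ (Fin d) × EuclideanSpace ℝ (Fin e), ∃ γ ∈ Γ, dist p γ ≤ R)
    (Ω : Set (EuclideanSpace ℝ (Fin e))) (hΩ : Bornology.IsBounded Ω)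
    (hM : ∃ R > 0, ∀ x : EuclideanSpace ℝ (Fin d),
      ∃ m ∈ Prod.fst '' ((Γ : Set (EuclideanSpace ℝ (Fin d) × EuclideanSpace ℝ (Fin e))) ∩
        Set.univ ×ˢ Ω), dist x m ≤ R) :
    ∀ v : EuclideanSpace ℝ (Fin d) × EuclideanSpace ℝ (Fin e),
      (∀ γ ∈ Γ, ⟪v.1, γ.1⟫ + ⟪v.2, γ.2⟫ = 0) → v.1 = 0 := by
  intro v hv
  by_contra h1
  have hv1 : 0 < ‖v.1‖ := norm_pos_iff.mpr h1
  obtain ⟨R, hR, hM⟩ := hM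
  obtain ⟨C, hC⟩ := hΩ.exists_norm_le
  -- choose a large multiple of v.1
  set t : ℝ := (‖v.1‖ * R + ‖v.2‖ * C + 1) / (‖v.1‖ ^ 2) with ht
  obtain ⟨m, ⟨γ, ⟨hγΓ, -, hγΩ⟩, hm1⟩, hm2⟩ := hM (t • v.1)
  subst hm1
  have horth := hv γ hγΓ
  have key : ⟪v.1, γ.1⟫ = ⟪v.1, t • v.1⟫ + ⟪v.1, γ.1 - t • v.1⟫ := by
    rw [← inner_add_right, add_sub_cancel]
  have h2 : ⟪v.1, t • v.1⟫ = t * ‖v.1‖ ^ 2 := by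
    rw [real_inner_smul_right, real_inner_self_eq_norm_sq]
  have h3 : |⟪v.1, γ.1 - t • v.1⟫| ≤ ‖v.1‖ * R := by
    calc |⟪v.1, γ.1 - t • v.1⟫| ≤ ‖v.1‖ * ‖γ.1 - t • v.1‖ := abs_real_inner_le_norm _ _
    _ ≤ ‖v.1‖ * R := by
        apply mul_le_mul_of_nonneg_left _ (norm_nonneg _)
        rw [← dist_eq_norm, dist_comm]
        exact hm2
  have h4 : |⟪v.2, γ.2⟫| ≤ ‖v.2‖ * C := by
    calc |⟪v.2, γ.2⟫| ≤ ‖v.2‖ * ‖γ.2‖ := abs_real_inner_le_norm _ _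
    _ ≤ ‖v.2‖ * C := mul_le_mul_of_nonneg_left (hC _ hγΩ) (norm_nonneg _)
  have hteq : t * ‖v.1‖ ^ 2 = ‖v.1‖ * R + ‖v.2‖ * C + 1 := by
    rw [ht]; exact div_mul_cancel₀ _ (pow_ne_zero _ hv1.ne')
  have : t * ‖v.1‖ ^ 2 = -⟪v.2, γ.2⟫ - ⟪v.1, γ.1 - t • v.1⟫ := by
    rw [key, h2] at horth; linarith
  have hbound : t * ‖v.1‖ ^ 2 ≤ ‖v.2‖ * C + ‖v.1‖ * R := by
    rw [this]
    have := abs_le.mp h3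
    have := abs_le.mp h4
    linarith
  rw [hteq] at hbound
  linarith
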